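/- For every well-ordering <_wo of ℝ, the Sierpiński coloring s : [ℝ]² → {0,1} (where s({x,y}) = 0 iff <_wo agrees with the usual order on {x,y}) has no monochromatic subset homeomorphic to the rational numbers ℚ. That is, for every Y ⊆ ℝ homeomorphic to ℚ, both colors occur on [Y]². -/

import Mathlib

open Topology Filter

/-- If `Y ⊆ ℝ` is infinite and `<` is well-founded on `Y`, then `Y` is not
homeomorphic to `ℚ` (its minimum is an isolated point). -/
lemma sierpinski_aux_lt (Y : Set ℝ) (hinf : Infinite ↑Y)
    (hwf : WellFounded (fun a b : Y => (a : ℝ) < (b : ℝ)))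
    (hQ : Nonempty (↑Y ≃ₜ ℚ)) : False := by
  classical
  haveI := hinf
  -- minimum of Y
  set m : Y := hwf.min Set.univ Set.univ_nonempty with hm
  have hmin : ∀ x : Y, ¬ ((x : ℝ) < (m : ℝ)) := fun x =>
    hwf.not_lt_min Set.univ (Set.mem_univ x)
  have hge : ∀ x : Y, x ≠ m → (m : ℝ) < (x : ℝ) := by
    intro x hx
    rcases lt_or_gt_of_ne (fun h : (x : ℝ) = (m : ℝ) => hx (Subtype.ext h)) with h | h
    · exact absurd h (hmin x)
    · exact h
  -- the set of elements above m
  have hS : {x : Y | (m : ℝ) < (x : ℝ)}.Nonempty := by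
    obtain ⟨x, hx⟩ := exists_ne m
    exact ⟨x, hge x hx⟩
  set m' : Y := hwf.min _ hS with hm'
  have hmm' : (m : ℝ) < (m' : ℝ) := hwf.min_mem _ hS
  have hmin' : ∀ x : Y, (m : ℝ) < (x : ℝ) → ¬ ((x : ℝ) < (m' : ℝ)) := fun x hx =>
    hwf.not_lt_min _ hx
  have hsingle : {x : Y | (x : ℝ) < (m' : ℝ)} = {m} := by
    ext x
    simp only [Set.mem_setOf_eq, Set.mem_singleton_iff]
    constructor
    · intro hx
      by_contra hxm
      exact hmin' x (hge x hxm) hx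
    · rintro rfl; exact hmm'
  have hopen : IsOpen ({m} : Set Y) := by
    have : IsOpen (Subtype.val ⁻¹' Set.Iio (m' : ℝ) : Set Y) :=
      (isOpen_Iio).preimage continuous_subtype_val
    rwa [show (Subtype.val ⁻¹' Set.Iio (m' : ℝ) : Set Y)
        = {x : Y | (x : ℝ) < (m' : ℝ)} from rfl, hsingle] at this
  obtain ⟨h⟩ := hQ
  have hopenQ : IsOpen ({h m} : Set ℚ) := by
    have := h.isOpenMap _ hopen
    rwa [Set.image_singleton] at this
  have hmem : ({h m} : Set ℚ) ∈ 𝓝[>] (h m) :=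
    mem_nhdsWithin_of_mem_nhds (hopenQ.mem_nhds rfl)
  have := Filter.nonempty_of_mem (Filter.inter_mem hmem self_mem_nhdsWithin)
  obtain ⟨q, hq1, hq2⟩ := this
  rw [Set.mem_singleton_iff] at hq1
  exact lt_irrefl _ (Set.mem_Ioi.mp (hq1 ▸ hq2))

/-- Mirror version: if `>` is well-founded on `Y`. -/
lemma sierpinski_aux_gt (Y : Set ℝ) (hinf : Infinite ↑Y)
    (hwf : WellFounded (fun a b : Y => (b : ℝ) < (a : ℝ)))
    (hQ : Nonempty (↑Y ≃ₜ ℚ)) : False := by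
  classical
  haveI := hinf
  set m : Y := hwf.min Set.univ Set.univ_nonempty with hm
  have hmin : ∀ x : Y, ¬ ((m : ℝ) < (x : ℝ)) := fun x =>
    hwf.not_lt_min Set.univ (Set.mem_univ x)
  have hge : ∀ x : Y, x ≠ m → (x : ℝ) < (m : ℝ) := by
    intro x hx
    rcases lt_or_gt_of_ne (fun h : (x : ℝ) = (m : ℝ) => hx (Subtype.ext h)) with h | h
    · exact h
    · exact absurd h (hmin x)
  have hS : {x : Y | (x : ℝ) < (m : ℝ)}.Nonempty := by
    obtain ⟨x, hx⟩ := exists_ne m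
    exact ⟨x, hge x hx⟩
  set m' : Y := hwf.min _ hS with hm'
  have hmm' : (m' : ℝ) < (m : ℝ) := hwf.min_mem _ hS
  have hmin' : ∀ x : Y, (x : ℝ) < (m : ℝ) → ¬ ((m' : ℝ) < (x : ℝ)) := fun x hx =>
    hwf.not_lt_min _ hx
  have hsingle : {x : Y | (m' : ℝ) < (x : ℝ)} = {m} := by
    ext x
    simp only [Set.mem_setOf_eq, Set.mem_singleton_iff]
    constructor
    · intro hx
      by_contra hxm
      exact hmin' x (hge x hxm) hx
    · rintro rfl; exact hmm'
  have hopen : IsOpen ({m} : Set Y) := by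
    have : IsOpen (Subtype.val ⁻¹' Set.Ioi (m' : ℝ) : Set Y) :=
      (isOpen_Ioi).preimage continuous_subtype_val
    rwa [show (Subtype.val ⁻¹' Set.Ioi (m' : ℝ) : Set Y)
        = {x : Y | (m' : ℝ) < (x : ℝ)} from rfl, hsingle] at this
  obtain ⟨h⟩ := hQ
  have hopenQ : IsOpen ({h m} : Set ℚ) := by
    have := h.isOpenMap _ hopen
    rwa [Set.image_singleton] at this
  have hmem : ({h m} : Set ℚ) ∈ 𝓝[>] (h m) :=
    mem_nhdsWithin_of_mem_nhds (hopenQ.mem_nhds rfl)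
  have := Filter.nonempty_of_mem (Filter.inter_mem hmem self_mem_nhdsWithin)
  obtain ⟨q, hq1, hq2⟩ := this
  rw [Set.mem_singleton_iff] at hq1
  exact lt_irrefl _ (Set.mem_Ioi.mp (hq1 ▸ hq2))

/- STATEMENT 2: For every well-ordering `r` of ℝ, the Sierpiński coloring
(color 0 iff `r` agrees with `<` on the pair) has no monochromatic subset
homeomorphic to ℚ: on every `Y ⊆ ℝ` homeomorphic to ℚ both colors occur. -/
theorem stmt_2 (r : ℝ → ℝ → Prop) (hr : IsWellOrder ℝ r) (Y : Set ℝ)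
    (hY : Nonempty (Y ≃ₜ ℚ)) :
    (∃ x ∈ Y, ∃ y ∈ Y, x ≠ y ∧ (r x y ↔ x < y)) ∧
    (∃ x ∈ Y, ∃ y ∈ Y, x ≠ y ∧ ¬(r x y ↔ x < y)) := by
  classical
  haveI := hr
  have hinf : Infinite ↑Y := by
    obtain ⟨h⟩ := hY
    exact Infinite.of_injective h.symm h.symm.injective
  have hwfr : WellFounded (fun a b : Y => r (a : ℝ) (b : ℝ)) :=
    InvImage.wf Subtype.val hr.toIsWellFounded.wf
  constructor
  · by_contra hc
    push_neg at hc
    -- every pair has color 1, so r reverses <, hence > is a subrelation of r on Y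
    have hsub : ∀ a b : Y, (b : ℝ) < (a : ℝ) → r (a : ℝ) (b : ℝ) := by
      intro a b hab
      have hne : (a : ℝ) ≠ (b : ℝ) := ne_of_gt hab
      rcases hc a a.2 b b.2 hne with ⟨h1, _⟩ | ⟨_, h2⟩
      · exact h1
      · exact absurd h2 (not_lt_of_gt hab)
    have hwf : WellFounded (fun a b : Y => (b : ℝ) < (a : ℝ)) :=
      Subrelation.wf (fun {a b} hab => hsub a b hab) hwfr
    exact sierpinski_aux_gt Y hinf hwf hY
  · by_contra hc
    push_neg at hc
    have hsub : ∀ a b : Y, (a : ℝ) < (b : ℝ) → r (a : ℝ) (b : ℝ) := by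
      intro a b hab
      exact (hc a a.2 b b.2 (ne_of_lt hab)).2 hab
    have hwf : WellFounded (fun a b : Y => (a : ℝ) < (b : ℝ)) :=
      Subrelation.wf (fun {a b} hab => hsub a b hab) hwfr
    exact sierpinski_aux_lt Y hinf hwf hY
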